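/- Let d > 1 be an integer and A = (a_0, …, a_k) a normal d-collection with critical indices j_1 < … < j_s = k (an index j ≤ k is critical if j = k or a_j < d − 1; set j_0 = −1), and let A_i consist of the entries a_t with j_{i−1} < t ≤ j_i. Then for every i < s, sum_d(A_i) ≤ d^{j_i + 1} − d^{j_{i−1}+1}. -/

import Mathlib

/-- The span of a `d`-collection `A : ℕ →₀ ℕ` (where `A i` is the multiplicity of the
token `d ^ i`): the set of all sums `∑ i, c i * d ^ i` over sub-collections `c ≤ A`. -/
def dspan (d : ℕ) (A : ℕ →₀ ℕ) : Set ℕ :=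
  {n : ℕ | ∃ c : ℕ →₀ ℕ, (∀ i, c i ≤ A i) ∧ n = c.sum (fun i m => m * d ^ i)}

/-- The total sum `∑ i, a_i * d ^ i` of a `d`-collection. -/
def dsum (d : ℕ) (A : ℕ →₀ ℕ) : ℕ := A.sum (fun i m => m * d ^ i)

/-- Elementary exchange at index `i`: replace `d` tokens `d ^ i` by one token `d ^ (i+1)`. -/
noncomputable def exch (d i : ℕ) (A : ℕ →₀ ℕ) : ℕ →₀ ℕ :=
  A - Finsupp.single i d + Finsupp.single (i + 1) 1

lemma geo_aux (d m : ℕ) (hd : 1 ≤ d) : ∀ n, m ≤ n →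
    (∑ t ∈ Finset.Ico m n, (d - 1) * d ^ t) + d ^ m = d ^ n := by
  intro n
  induction n with
  | zero => intro h; interval_cases m; simp
  | succ n ih =>
    intro h
    rcases Nat.lt_or_ge m (n + 1) with h' | h'
    · have hmn : m ≤ n := by omega
      rw [Finset.sum_Ico_succ_top hmn, add_right_comm, ih hmn]
      rw [pow_succ, Nat.mul_comm (d ^ n) d]
      have : (d - 1) * d ^ n + d ^ n = (d - 1 + 1) * d ^ n := by ring
      rw [add_comm (d ^ n), this, Nat.sub_add_cancel hd]
    · have : m = n + 1 := by omega
      subst this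
      simp

theorem stmt_8 (d : ℕ) (hd : 1 < d) (A : ℕ →₀ ℕ) (k : ℕ)
    (hk : A k ≠ 0) (hsupp : ∀ t, A t ≠ 0 → t ≤ k)
    (hnorm : ∀ t, A t ≤ 2 * (d - 1))
    (s : ℕ) (hs : 0 < s) (b : ℕ → ℕ)
    (hb0 : b 0 = 0) (hbmono : ∀ i < s, b i < b (i + 1)) (hbs : b s = k + 1)
    (hcrit : ∀ t ≤ k, ((t = k ∨ A t < d - 1) ↔ ∃ i, 0 < i ∧ i ≤ s ∧ b i = t + 1)) :
    ∀ i, i + 1 < s →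
      dsum d (A.filter (fun t => b i ≤ t ∧ t < b (i + 1))) ≤
        d ^ (b (i + 1)) - d ^ (b i) := by
  -- strict chain
  have hchain : ∀ q ≤ s, ∀ p < q, b p < b q := by
    intro q
    induction q with
    | zero => intro _ p hp; omega
    | succ q ih =>
      intro hq p hp
      rcases Nat.lt_succ_iff_lt_or_eq.mp hp with h | rfl
      · exact (ih (by omega) p h).trans (hbmono q (by omega))
      · exact hbmono p (by omega)
  intro i hi
  set m := b i with hm
  have hmn : m < b (i + 1) := hbmono i (by omega)
  have hnk : b (i + 1) < k + 1 := by
    rw [← hbs]; exact hchain s le_rfl (i + 1) hi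
  obtain ⟨p, hnp⟩ : ∃ p, b (i + 1) = p + 1 := ⟨b (i + 1) - 1, by omega⟩
  rw [hnp] at hmn hnk ⊢
  -- A p < d - 1
  have hAp : A p < d - 1 := by
    have := (hcrit p (by omega)).mpr ⟨i + 1, by omega, by omega, hnp⟩
    rcases this with h | h
    · omega
    · exact h
  -- rewrite dsum as a sum over Ico
  have hsub : (A.filter (fun t => m ≤ t ∧ t < p + 1)).support ⊆ Finset.Ico m (p + 1) := by
    intro t ht
    rw [Finsupp.support_filter, Finset.mem_filter] at ht
    exact Finset.mem_Ico.mpr ht.2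
  have heq : dsum d (A.filter (fun t => m ≤ t ∧ t < p + 1)) =
      ∑ t ∈ Finset.Ico m (p + 1), A t * d ^ t := by
    rw [dsum, Finsupp.sum_of_support_subset _ hsub (fun i m => m * d ^ i) (fun i _ => zero_mul _)]
    refine Finset.sum_congr rfl fun t ht => ?_
    classical
    rw [Finsupp.filter_apply]
    simp [Finset.mem_Ico.mp ht]
  rw [heq]
  rw [Finset.sum_Ico_succ_top (by omega)]
  have h1 : ∑ t ∈ Finset.Ico m p, A t * d ^ t ≤
      ∑ t ∈ Finset.Ico m p, 2 * ((d - 1) * d ^ t) := by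
    refine Finset.sum_le_sum fun t _ => ?_
    have := hnorm t
    calc A t * d ^ t ≤ 2 * (d - 1) * d ^ t := Nat.mul_le_mul_right _ this
    _ = 2 * ((d - 1) * d ^ t) := by ring
  have h2 : A p * d ^ p ≤ (d - 2) * d ^ p := Nat.mul_le_mul_right _ (by omega)
  have hgeo := geo_aux d m (by omega) p (by omega)
  set S := ∑ t ∈ Finset.Ico m p, (d - 1) * d ^ t with hS
  rw [← Finset.mul_sum] at h1
  have hT : (d - 2) * d ^ p + 2 * d ^ p = d ^ (p + 1) := by
    have : (d - 2) * d ^ p + 2 * d ^ p = (d - 2 + 2) * d ^ p := by ring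
    rw [this, Nat.sub_add_cancel (by omega), pow_succ, Nat.mul_comm]
  have hMle : d ^ m ≤ d ^ p := Nat.pow_le_pow_right (by omega) (by omega)
  have hMpos : 0 < d ^ m := Nat.pow_pos (by omega)
  omega
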